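/- (Theorem 3.7, effects on in-sample evaluation: relabeling perturbs expectations by at most the smoothness bound.) Let ρ be a probability measure on ℝⁿ, let δ ≥ 0, and let g : ℝⁿ → ℝⁿ be measurable with ‖g(x) − x‖ ≤ δ for ρ-almost every x. Assume x ↦ ‖x‖ and x ↦ ‖g(x)‖ are ρ-integrable, and let Q : ℝⁿ → ℝ satisfy the NTK smoothness property with constant C ≥ 0. Then |∫ Q(g(x)) dρ(x) − ∫ Q(x) dρ(x)| ≤ C·(√(min(∫ ‖g(x)‖ dρ(x), ∫ ‖x‖ dρ(x)))·√δ + 2δ). -/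

import Mathlib

open MeasureTheory

lemma ntk_cont {n : ℕ} {Q : EuclideanSpace ℝ (Fin n) → ℝ} {C : ℝ} (hC : 0 ≤ C)
    (hQ : ∀ x y, |Q x - Q y| ≤ C * (Real.sqrt (min ‖x‖ ‖y‖) * Real.sqrt ‖x - y‖ + 2 * ‖x - y‖)) :
    Continuous Q := by
  rw [continuous_iff_continuousAt]
  intro x
  have hnorm : Filter.Tendsto (fun y : EuclideanSpace ℝ (Fin n) => ‖y - x‖) (nhds x) (nhds 0) := by
    simpa using ((continuous_id.sub (continuous_const (y := x))).norm.tendsto x)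
  have hb : Filter.Tendsto (fun y => Q y - Q x) (nhds x) (nhds 0) := by
    apply squeeze_zero_norm (a := fun y => C * (Real.sqrt ‖x‖ * Real.sqrt ‖y - x‖ + 2 * ‖y - x‖))
    · intro y
      calc ‖Q y - Q x‖ ≤ C * (Real.sqrt (min ‖y‖ ‖x‖) * Real.sqrt ‖y - x‖ + 2 * ‖y - x‖) := hQ y x
        _ ≤ C * (Real.sqrt ‖x‖ * Real.sqrt ‖y - x‖ + 2 * ‖y - x‖) := by
            gcongr
            exact min_le_right _ _
    · have hs : Filter.Tendsto (fun y : EuclideanSpace ℝ (Fin n) => Real.sqrt ‖y - x‖)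
          (nhds x) (nhds 0) := by
        have := (Real.continuous_sqrt.tendsto 0).comp hnorm
        simpa [Function.comp_def] using this
      have := ((hs.const_mul (Real.sqrt ‖x‖)).add (hnorm.const_mul 2)).const_mul C
      simpa using this
  have : Filter.Tendsto (fun y => (Q y - Q x) + Q x) (nhds x) (nhds (0 + Q x)) :=
    hb.add_const _
  simpa [ContinuousAt] using this


/-- `Q` satisfies the NTK smoothness property with constant `C`
(Lemma A.3 of the paper, taken as a hypothesis). -/
def NTKSmooth {n : ℕ} (Q : EuclideanSpace ℝ (Fin n) → ℝ) (C : ℝ) : Prop :=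
  ∀ x y, |Q x - Q y| ≤ C * (Real.sqrt (min ‖x‖ ‖y‖) * Real.sqrt ‖x - y‖ + 2 * ‖x - y‖)

/-- Theorem 3.7 (effects on in-sample evaluation): relabeling by a map `g`
moving each point by at most `δ` perturbs the expectation of an NTK-smooth `Q`
by at most `C(√(min(E‖g x‖, E‖x‖))·√δ + 2δ)`. -/
theorem relabeling_perturbs_expectation {n : ℕ}
    (ρ : Measure (EuclideanSpace ℝ (Fin n))) [IsProbabilityMeasure ρ]
    (δ : ℝ) (hδ : 0 ≤ δ)
    (g : EuclideanSpace ℝ (Fin n) → EuclideanSpace ℝ (Fin n)) (hg : Measurable g)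
    (hclose : ∀ᵐ x ∂ρ, ‖g x - x‖ ≤ δ)
    (hint : Integrable (fun x => ‖x‖) ρ)
    (hintg : Integrable (fun x => ‖g x‖) ρ)
    (Q : EuclideanSpace ℝ (Fin n) → ℝ) (C : ℝ) (hC : 0 ≤ C)
    (hQ : NTKSmooth Q C) :
    |(∫ x, Q (g x) ∂ρ) - ∫ x, Q x ∂ρ| ≤
      C * (Real.sqrt (min (∫ x, ‖g x‖ ∂ρ) (∫ x, ‖x‖ ∂ρ)) * Real.sqrt δ + 2 * δ) := by
  have hQc : Continuous Q := ntk_cont hC hQ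
  -- linear growth
  have hgrow : ∀ x, |Q x| ≤ |Q 0| + 2 * C * ‖x‖ := by
    intro x
    have := hQ x 0
    simp only [norm_zero, min_comm, sub_zero] at this
    have h0 : Real.sqrt (min ‖x‖ ‖(0 : EuclideanSpace ℝ (Fin n))‖) = 0 := by
      simp [min_comm]
    calc |Q x| ≤ |Q x - Q 0| + |Q 0| := by
          have := abs_sub_abs_le_abs_sub (Q x) (Q 0); linarith [abs_add_le (Q x - Q 0) (Q 0), abs_sub_abs_le_abs_sub (Q x) (Q 0)]
      _ ≤ C * (0 * Real.sqrt ‖x‖ + 2 * ‖x‖) + |Q 0| := by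
          have h := hQ x 0
          rw [show min ‖x‖ ‖(0:EuclideanSpace ℝ (Fin n))‖ = 0 by simp [min_comm]] at h
          simp only [Real.sqrt_zero, sub_zero] at h ⊢
          linarith
      _ = |Q 0| + 2 * C * ‖x‖ := by ring
  -- integrability of Q and Q ∘ g
  have hQint : Integrable (fun x => Q x) ρ := by
    apply Integrable.mono ((integrable_const (|Q 0|)).add (hint.const_mul (2*C)))
      (hQc.aestronglyMeasurable)
    filter_upwards with x
    simp only [Real.norm_eq_abs]
    calc |Q x| ≤ |Q 0| + 2 * C * ‖x‖ := hgrow x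
      _ ≤ |(|Q 0| + 2 * C * ‖x‖)| := le_abs_self _
  have hQgint : Integrable (fun x => Q (g x)) ρ := by
    apply Integrable.mono ((integrable_const (|Q 0|)).add (hintg.const_mul (2*C)))
      ((hQc.measurable.comp hg).aestronglyMeasurable)
    filter_upwards with x
    simp only [Real.norm_eq_abs]
    calc |Q (g x)| ≤ |Q 0| + 2 * C * ‖g x‖ := hgrow _
      _ ≤ |(|Q 0| + 2 * C * ‖g x‖)| := le_abs_self _
  -- measurability of min function
  have hmin_meas : Measurable (fun x : EuclideanSpace ℝ (Fin n) => min ‖g x‖ ‖x‖) :=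
    (hg.norm.min measurable_norm)
  have hmin_int : Integrable (fun x => min ‖g x‖ ‖x‖) ρ := by
    apply Integrable.mono hint hmin_meas.aestronglyMeasurable
    filter_upwards with x
    simp only [Real.norm_eq_abs]
    rw [abs_of_nonneg (le_min (norm_nonneg _) (norm_nonneg _)), abs_of_nonneg (norm_nonneg _)]
    exact min_le_right _ _
  have hsqrtmin_int : Integrable (fun x => Real.sqrt (min ‖g x‖ ‖x‖)) ρ := by
    apply Integrable.mono ((integrable_const (1:ℝ)).add hmin_int)
      (Real.continuous_sqrt.measurable.comp hmin_meas).aestronglyMeasurable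
    filter_upwards with x
    have h1 : (0:ℝ) ≤ min ‖g x‖ ‖x‖ := le_min (norm_nonneg _) (norm_nonneg _)
    simp only [Real.norm_eq_abs, Pi.add_apply, Function.comp_apply]
    rw [abs_of_nonneg (Real.sqrt_nonneg _), abs_of_nonneg (by linarith)]
    nlinarith [Real.sq_sqrt h1, Real.sqrt_nonneg (min ‖g x‖ ‖x‖)]
  -- pointwise bound
  have key : |(∫ x, Q (g x) ∂ρ) - ∫ x, Q x ∂ρ| ≤
      ∫ x, C * (Real.sqrt (min ‖g x‖ ‖x‖) * Real.sqrt δ + 2 * δ) ∂ρ := by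
    rw [← integral_sub hQgint hQint]
    refine le_trans (by simpa [Real.norm_eq_abs] using norm_integral_le_integral_norm (fun x => Q (g x) - Q x) (μ := ρ)) ?_
    apply integral_mono_ae (hQgint.sub hQint).abs
    · exact ((hsqrtmin_int.mul_const _).add (integrable_const _)).const_mul C
    · filter_upwards [hclose] with x hx
      calc |Q (g x) - Q x| ≤ C * (Real.sqrt (min ‖g x‖ ‖x‖) * Real.sqrt ‖g x - x‖ + 2 * ‖g x - x‖) :=
            hQ (g x) x
        _ ≤ C * (Real.sqrt (min ‖g x‖ ‖x‖) * Real.sqrt δ + 2 * δ) := by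
            gcongr
  -- evaluate and bound the integral
  rw [integral_const_mul, integral_add (hsqrtmin_int.mul_const _) (integrable_const _), integral_mul_const, integral_const] at key
  simp only [probReal_univ, measure_univ, ENNReal.toReal_one, smul_eq_mul, one_mul] at key
  refine key.trans ?_
  gcongr
  -- ∫ sqrt(min) ≤ sqrt(min of integrals)
  have jensen : (∫ x, Real.sqrt (min ‖g x‖ ‖x‖) ∂ρ) ≤ Real.sqrt (∫ x, min ‖g x‖ ‖x‖ ∂ρ) := by
    apply ConcaveOn.le_map_integral (Real.strictConcaveOn_sqrt.concaveOn)
      (Real.continuous_sqrt.continuousOn) isClosed_Ici ?_ hmin_int hsqrtmin_int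
    filter_upwards with x
    exact le_min (norm_nonneg _) (norm_nonneg _)
  refine jensen.trans ?_
  apply Real.sqrt_le_sqrt
  apply le_min
  · apply integral_mono_ae hmin_int hintg
    filter_upwards with x; exact min_le_left _ _
  · apply integral_mono_ae hmin_int hint
    filter_upwards with x; exact min_le_right _ _
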